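/- Suppose ‖A‖_{B,∞,1} ≤ 1 − α for α ∈ (0,1], ‖u‖_{∞,2} ≤ αλ/(4(1−α)), ‖Z‖_{∞,2} ≤ 1, and ‖v‖_{B,∞,2} ≤ αλ/4. Then ‖A u‖_{B,∞,2} + λ‖A Z‖_{B,∞,2} + ‖v‖_{B,∞,2} ≤ λ(1 − α/2) < λ, using the inequalities ‖Au‖_{B,∞,2} ≤ ‖A‖_{B,∞,1}‖u‖_{∞,2} and ‖AZ‖_{B,∞,2} ≤ ‖A‖_{B,∞,1}‖Z‖_{∞,2}. -/

import Mathlib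

lemma sqrt_sum_le_sum_sqrt {ι : Type*} (s : Finset ι) (f : ι → ℝ) (hf : ∀ i ∈ s, 0 ≤ f i) :
    Real.sqrt (∑ i ∈ s, f i) ≤ ∑ i ∈ s, Real.sqrt (f i) := by
  have h1 : ∑ i ∈ s, f i ≤ (∑ i ∈ s, Real.sqrt (f i)) ^ 2 := by
    have := Finset.sum_sq_le_sq_sum_of_nonneg (s := s) (f := fun i => Real.sqrt (f i))
      (fun i _ => Real.sqrt_nonneg _)
    calc ∑ i ∈ s, f i = ∑ i ∈ s, (Real.sqrt (f i)) ^ 2 := by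
          exact Finset.sum_congr rfl fun i hi => (Real.sq_sqrt (hf i hi)).symm
      _ ≤ _ := this
  calc Real.sqrt (∑ i ∈ s, f i) ≤ Real.sqrt ((∑ i ∈ s, Real.sqrt (f i)) ^ 2) :=
        Real.sqrt_le_sqrt h1
    _ = _ := Real.sqrt_sq (Finset.sum_nonneg fun i _ => Real.sqrt_nonneg _)

lemma row_bound {n k : ℕ} (a : Fin n → ℝ) (w : Fin n → Fin k → ℝ) :
    Real.sqrt (∑ c, (∑ j, a j * w j c) ^ 2) ≤ ∑ j, |a j| * Real.sqrt (∑ c, (w j c) ^ 2) := by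
  have key : ∀ x : Fin k → ℝ, Real.sqrt (∑ c, (x c) ^ 2)
      = ‖(WithLp.linearEquiv 2 ℝ (Fin k → ℝ)).symm x‖ := by
    intro x
    rw [show ((WithLp.linearEquiv 2 ℝ (Fin k → ℝ)).symm x : EuclideanSpace ℝ (Fin k))
        = (WithLp.equiv 2 (Fin k → ℝ)).symm x from rfl, EuclideanSpace.norm_eq]
    simp [sq_abs]
  have hvec : (fun c => ∑ j, a j * w j c) = ∑ j, a j • w j := by
    funext c; simp [Finset.sum_apply]
  calc Real.sqrt (∑ c, (∑ j, a j * w j c) ^ 2)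
      = ‖(WithLp.linearEquiv 2 ℝ (Fin k → ℝ)).symm (∑ j, a j • w j)‖ := by
        rw [key]; congr 1; exact congrArg _ hvec
    _ = ‖∑ j, a j • ((WithLp.linearEquiv 2 ℝ (Fin k → ℝ)).symm (w j))‖ := by
        rw [map_sum]
        simp only [map_smul]
    _ ≤ ∑ j, ‖a j • ((WithLp.linearEquiv 2 ℝ (Fin k → ℝ)).symm (w j))‖ := norm_sum_le _ _
    _ = ∑ j, |a j| * Real.sqrt (∑ c, (w j c) ^ 2) := by
        refine Finset.sum_congr rfl fun j _ => ?_
        rw [norm_smul, key]; simp [Real.norm_eq_abs]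

lemma block_bound {mm n k : ℕ} (B : Matrix (Fin mm) (Fin n) ℝ) (W : Matrix (Fin n) (Fin k) ℝ)
    (C M : ℝ) (hM : 0 ≤ M) (hB : ∑ r, ∑ c, |B r c| ≤ C)
    (hW : ∀ j, Real.sqrt (∑ c, (W j c) ^ 2) ≤ M) :
    Real.sqrt (∑ r, ∑ c, ((B * W) r c) ^ 2) ≤ C * M := by
  have h1 : Real.sqrt (∑ r, ∑ c, ((B * W) r c) ^ 2)
      ≤ ∑ r, Real.sqrt (∑ c, ((B * W) r c) ^ 2) :=
    sqrt_sum_le_sum_sqrt _ _ fun r _ => Finset.sum_nonneg fun c _ => sq_nonneg _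
  have h2 : ∀ r, Real.sqrt (∑ c, ((B * W) r c) ^ 2) ≤ ∑ j, |B r j| * M := by
    intro r
    have : Real.sqrt (∑ c, ((B * W) r c) ^ 2)
        ≤ ∑ j, |B r j| * Real.sqrt (∑ c, (W j c) ^ 2) := by
      simpa only [Matrix.mul_apply] using row_bound (fun j => B r j) (fun j c => W j c)
    refine this.trans (Finset.sum_le_sum fun j _ => ?_)
    exact mul_le_mul_of_nonneg_left (hW j) (abs_nonneg _)
  calc Real.sqrt (∑ r, ∑ c, ((B * W) r c) ^ 2) ≤ ∑ r, ∑ j, |B r j| * M :=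
        h1.trans (Finset.sum_le_sum fun r _ => h2 r)
    _ = (∑ r, ∑ j, |B r j|) * M := by rw [Finset.sum_mul]; simp [Finset.sum_mul]
    _ ≤ C * M := mul_le_mul_of_nonneg_right hB hM

/-- Combining the mutual incoherence bound with the block norm inequalities:
`‖Au‖_{B,∞,2} + λ‖AZ‖_{B,∞,2} + ‖v‖_{B,∞,2} ≤ λ(1 − α/2) < λ`. -/
theorem dual_feasibility_bound {P n k : ℕ} (m : Fin P → ℕ)
    (A : (i : Fin P) → Matrix (Fin (m i)) (Fin n) ℝ)
    (u Z : Matrix (Fin n) (Fin k) ℝ)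
    (v : (i : Fin P) → Matrix (Fin (m i)) (Fin k) ℝ)
    (lam α : ℝ) (hlam : 0 < lam) (hα : 0 < α) (hα1 : α ≤ 1)
    (hA : (⨆ i, ∑ r, ∑ c, |A i r c|) ≤ 1 - α)
    (hu : (⨆ j : Fin n, Real.sqrt (∑ c, (u j c) ^ 2)) ≤ α * lam / (4 * (1 - α)))
    (hZ : (⨆ j : Fin n, Real.sqrt (∑ c, (Z j c) ^ 2)) ≤ 1)
    (hv : (⨆ i, Real.sqrt (∑ r, ∑ c, (v i r c) ^ 2)) ≤ α * lam / 4) :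
    (⨆ i, Real.sqrt (∑ r, ∑ c, ((A i * u) r c) ^ 2)) +
      lam * (⨆ i, Real.sqrt (∑ r, ∑ c, ((A i * Z) r c) ^ 2)) +
      (⨆ i, Real.sqrt (∑ r, ∑ c, (v i r c) ^ 2)) ≤ lam * (1 - α / 2) ∧
    lam * (1 - α / 2) < lam := by
  have h1α : 0 ≤ 1 - α := by linarith
  set Mu := ⨆ j : Fin n, Real.sqrt (∑ c, (u j c) ^ 2) with hMu
  set Mz := ⨆ j : Fin n, Real.sqrt (∑ c, (Z j c) ^ 2) with hMz
  have hMu0 : 0 ≤ Mu := Real.iSup_nonneg fun j => Real.sqrt_nonneg _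
  have hMz0 : 0 ≤ Mz := Real.iSup_nonneg fun j => Real.sqrt_nonneg _
  have hAi : ∀ i, ∑ r, ∑ c, |A i r c| ≤ 1 - α := fun i =>
    le_trans (le_ciSup (f := fun i => ∑ r, ∑ c, |A i r c|)
      (Set.Finite.bddAbove (Set.finite_range _)) i) hA
  -- bound on Au blocks
  have hAu : (⨆ i, Real.sqrt (∑ r, ∑ c, ((A i * u) r c) ^ 2)) ≤ (1 - α) * Mu := by
    refine Real.iSup_le (fun i => ?_) (mul_nonneg h1α hMu0)
    exact block_bound (A i) u (1 - α) Mu hMu0 (hAi i)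
      (fun j => hMu ▸ le_ciSup (f := fun j => Real.sqrt (∑ c, (u j c) ^ 2))
        (Set.Finite.bddAbove (Set.finite_range _)) j)
  have hAz : (⨆ i, Real.sqrt (∑ r, ∑ c, ((A i * Z) r c) ^ 2)) ≤ 1 - α := by
    refine Real.iSup_le (fun i => ?_) h1α
    have := block_bound (A i) Z (1 - α) Mz hMz0 (hAi i)
      (fun j => hMz ▸ le_ciSup (f := fun j => Real.sqrt (∑ c, (Z j c) ^ 2))
        (Set.Finite.bddAbove (Set.finite_range _)) j)
    nlinarith [this, mul_le_mul_of_nonneg_left hZ h1α]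
  have hMuBound : (1 - α) * Mu ≤ α * lam / 4 := by
    rcases eq_or_lt_of_le hα1 with h | h
    · simp [← h]
      positivity
    · have h0 : (0:ℝ) < 1 - α := by linarith
      have := mul_le_mul_of_nonneg_left hu h1α
      calc (1 - α) * Mu ≤ (1 - α) * (α * lam / (4 * (1 - α))) := this
        _ = α * lam / 4 := by field_simp
  have hAzL : lam * (⨆ i, Real.sqrt (∑ r, ∑ c, ((A i * Z) r c) ^ 2)) ≤ lam * (1 - α) :=
    mul_le_mul_of_nonneg_left hAz hlam.le
  constructor
  · nlinarith [hAu.trans hMuBound, hAzL, hv]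
  · nlinarith [mul_pos hlam hα]
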